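/- If G is a countable graph satisfying the extension property (for all finite disjoint vertex sets A and B there is a vertex adjacent to every vertex of A and to no vertex of B), and G' also satisfies the extension property, then G and G' are isomorphic. -/

import Mathlib

def ExtProp {V : Type*} (G : SimpleGraph V) : Prop :=
  ∀ A B : Finset V, Disjoint A B →
    ∃ v, v ∉ A ∧ v ∉ B ∧ (∀ a ∈ A, G.Adj v a) ∧ ∀ b ∈ B, ¬ G.Adj v b

def switch {V : Type*} (G : SimpleGraph V) (X : Set V) : SimpleGraph V where
  Adj u v := u ≠ v ∧ (G.Adj u v ↔ ((u ∈ X) ↔ (v ∈ X)))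
  symm := by
    refine ⟨fun u v h => ?_⟩
    refine ⟨h.1.symm, ?_⟩
    rw [G.adj_comm]
    tauto
  loopless := by exact ⟨fun v h => h.1 rfl⟩

section Aux

variable {V V' : Type*} (G : SimpleGraph V) (G' : SimpleGraph V')

/-- A finite partial isomorphism, given as a list of pairs. -/
def PIso (L : List (V × V')) : Prop :=
  (L.map Prod.fst).Nodup ∧ (L.map Prod.snd).Nodup ∧
    ∀ p ∈ L, ∀ q ∈ L, G.Adj p.1 q.1 ↔ G'.Adj p.2 q.2

variable {G G'}

lemma PIso.swap {L : List (V × V')} (h : PIso G G' L) :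
    PIso G' G (L.map Prod.swap) := by
  obtain ⟨h1, h2, h3⟩ := h
  refine ⟨?_, ?_, ?_⟩
  · simpa [List.map_map, Function.comp_def] using h2
  · simpa [List.map_map, Function.comp_def] using h1
  · intro p hp q hq
    simp only [List.mem_map] at hp hq
    obtain ⟨p', hp', rfl⟩ := hp
    obtain ⟨q', hq', rfl⟩ := hq
    exact (h3 p' hp' q' hq').symm

lemma extProp_infinite (h : ExtProp G) : Infinite V := by
  rw [← not_finite_iff_infinite]
  intro hf
  have : Fintype V := Fintype.ofFinite V
  obtain ⟨v, hv, -⟩ := h Finset.univ ∅ (Finset.disjoint_empty_right _)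
  exact hv (Finset.mem_univ v)

lemma extend_left (h' : ExtProp G') {L : List (V × V')} (hL : PIso G G' L) (v : V) :
    ∃ L', PIso G G' L' ∧ L.Sublist L' ∧ v ∈ L'.map Prod.fst := by
  classical
  by_cases hv : v ∈ L.map Prod.fst
  · exact ⟨L, hL, List.Sublist.refl L, hv⟩
  obtain ⟨h1, h2, h3⟩ := hL
  set A : Finset V' := (L.toFinset.filter (fun p => G.Adj v p.1)).image Prod.snd with hA
  set B : Finset V' := (L.toFinset.filter (fun p => ¬ G.Adj v p.1)).image Prod.snd with hB
  have hinj : ∀ p ∈ L, ∀ q ∈ L, p.2 = q.2 → p = q := List.inj_on_of_nodup_map h2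
  have hdisj : Disjoint A B := by
    rw [Finset.disjoint_left]
    intro w hwA hwB
    simp only [hA, hB, Finset.mem_image, Finset.mem_filter, List.mem_toFinset] at hwA hwB
    obtain ⟨p, ⟨hp, hpa⟩, rfl⟩ := hwA
    obtain ⟨q, ⟨hq, hqa⟩, hpq⟩ := hwB
    exact hqa (hinj q hq p hp hpq ▸ hpa)
  obtain ⟨w, hwA, hwB, hadjA, hadjB⟩ := h' A B hdisj
  have hmemAB : ∀ p ∈ L, p.2 ∈ A ∪ B := by
    intro p hp
    simp only [hA, hB, Finset.mem_union, Finset.mem_image, Finset.mem_filter,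
      List.mem_toFinset]
    by_cases hadj : G.Adj v p.1
    · exact Or.inl ⟨p, ⟨hp, hadj⟩, rfl⟩
    · exact Or.inr ⟨p, ⟨hp, hadj⟩, rfl⟩
  have hwsnd : w ∉ L.map Prod.snd := by
    intro hw
    obtain ⟨p, hp, rfl⟩ := List.mem_map.mp hw
    rcases Finset.mem_union.mp (hmemAB p hp) with hh | hh
    · exact hwA hh
    · exact hwB hh
  have hiff : ∀ p ∈ L, (G.Adj v p.1 ↔ G'.Adj w p.2) := by
    intro p hp
    constructor
    · intro hadj
      apply hadjA
      simp only [hA, Finset.mem_image, Finset.mem_filter, List.mem_toFinset]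
      exact ⟨p, ⟨hp, hadj⟩, rfl⟩
    · intro hadj
      by_contra hna
      refine hadjB p.2 ?_ hadj
      simp only [hB, Finset.mem_image, Finset.mem_filter, List.mem_toFinset]
      exact ⟨p, ⟨hp, hna⟩, rfl⟩
  refine ⟨(v, w) :: L, ⟨?_, ?_, ?_⟩, List.sublist_cons_self _ _, by simp⟩
  · rw [List.map_cons, List.nodup_cons]; exact ⟨hv, h1⟩
  · rw [List.map_cons, List.nodup_cons]; exact ⟨hwsnd, h2⟩
  · intro p hp q hq
    rcases List.mem_cons.mp hp with rfl | hp <;> rcases List.mem_cons.mp hq with rfl | hq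
    · simp
    · exact hiff q hq
    · simpa [G.adj_comm, G'.adj_comm] using hiff p hp
    · exact h3 p hp q hq

lemma extend_right (h : ExtProp G) {L : List (V × V')} (hL : PIso G G' L) (w : V') :
    ∃ L', PIso G G' L' ∧ L.Sublist L' ∧ w ∈ L'.map Prod.snd := by
  obtain ⟨M, hM, hsub, hmem⟩ := extend_left h hL.swap w
  refine ⟨M.map Prod.swap, ?_, ?_, ?_⟩
  · simpa [List.map_map, Function.comp_def, Prod.swap] using hM.swap
  · have := hsub.map Prod.swap
    simpa [List.map_map, Function.comp_def] using this
  · simpa [List.map_map, Function.comp_def] using hmem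

lemma step (h : ExtProp G) (h' : ExtProp G') {L : List (V × V')} (hL : PIso G G' L)
    (v : V) (w : V') :
    ∃ L', PIso G G' L' ∧ L.Sublist L' ∧ v ∈ L'.map Prod.fst ∧ w ∈ L'.map Prod.snd := by
  obtain ⟨M, hM, hsub, hmem⟩ := extend_left h' hL v
  obtain ⟨N, hN, hsub', hmem'⟩ := extend_right h hM w
  exact ⟨N, hN, hsub.trans hsub', (hsub'.map Prod.fst).mem hmem, hmem'⟩

end Aux

theorem rado_unique {V V' : Type*} [Countable V] [Countable V']
    (G : SimpleGraph V) (G' : SimpleGraph V')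
    (h : ExtProp G) (h' : ExtProp G') : Nonempty (G ≃g G') := by
  classical
  have : Infinite V := extProp_infinite h
  have : Infinite V' := extProp_infinite h'
  obtain ⟨e⟩ : Nonempty (ℕ ≃ V) := nonempty_equiv_of_countable
  obtain ⟨e'⟩ : Nonempty (ℕ ≃ V') := nonempty_equiv_of_countable
  -- the chain of partial isomorphisms
  let S : ℕ → {L : List (V × V') // PIso G G' L} :=
    fun n => Nat.rec ⟨[], by refine ⟨by simp, by simp, by simp⟩⟩
      (fun n p => ⟨(step h h' p.2 (e n) (e' n)).choose,
        (step h h' p.2 (e n) (e' n)).choose_spec.1⟩) n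
  have hstep : ∀ n, ((S n).1).Sublist ((S (n+1)).1) ∧
      e n ∈ ((S (n+1)).1).map Prod.fst ∧ e' n ∈ ((S (n+1)).1).map Prod.snd := by
    intro n
    exact ⟨(step h h' (S n).2 (e n) (e' n)).choose_spec.2.1,
      (step h h' (S n).2 (e n) (e' n)).choose_spec.2.2.1,
      (step h h' (S n).2 (e n) (e' n)).choose_spec.2.2.2⟩
  have hmono : ∀ {m n}, m ≤ n → ((S m).1).Sublist ((S n).1) := by
    intro m n hmn
    induction n with
    | zero => simp [Nat.le_zero.mp hmn]
    | succ n ih =>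
      rcases Nat.lt_or_ge m (n+1) with hlt | hge
      · exact (ih (Nat.lt_succ_iff.mp hlt)).trans (hstep n).1
      · have : m = n + 1 := le_antisymm hmn hge
        subst this; exact List.Sublist.refl _
  -- every vertex appears
  have hfst : ∀ v : V, ∃ w, (v, w) ∈ ((S (e.symm v + 1)).1) := by
    intro v
    have := (hstep (e.symm v)).2.1
    rw [Equiv.apply_symm_apply] at this
    obtain ⟨p, hp, hfst⟩ := List.mem_map.mp this
    subst hfst
    exact ⟨p.2, by simpa using hp⟩
  have hsnd : ∀ w : V', ∃ v, (v, w) ∈ ((S (e'.symm w + 1)).1) := by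
    intro w
    have := (hstep (e'.symm w)).2.2
    rw [Equiv.apply_symm_apply] at this
    obtain ⟨p, hp, hsnd⟩ := List.mem_map.mp this
    subst hsnd
    exact ⟨p.1, by simpa using hp⟩
  -- functionality
  have keyfun : ∀ {m n} {p q : V × V'}, p ∈ ((S m).1) → q ∈ ((S n).1) → p.1 = q.1 → p = q := by
    intro m n p q hp hq h1
    rcases le_total m n with hmn | hmn
    · exact List.inj_on_of_nodup_map (S n).2.1 ((hmono hmn).mem hp) hq h1
    · exact List.inj_on_of_nodup_map (S m).2.1 hp ((hmono hmn).mem hq) h1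
  have keyfun' : ∀ {m n} {p q : V × V'}, p ∈ ((S m).1) → q ∈ ((S n).1) → p.2 = q.2 → p = q := by
    intro m n p q hp hq h1
    rcases le_total m n with hmn | hmn
    · exact List.inj_on_of_nodup_map (S n).2.2.1 ((hmono hmn).mem hp) hq h1
    · exact List.inj_on_of_nodup_map (S m).2.2.1 hp ((hmono hmn).mem hq) h1
  let f : V → V' := fun v => (hfst v).choose
  let g : V' → V := fun w => (hsnd w).choose
  have hf : ∀ v, (v, f v) ∈ ((S (e.symm v + 1)).1) := fun v => (hfst v).choose_spec
  have hg : ∀ w, (g w, w) ∈ ((S (e'.symm w + 1)).1) := fun w => (hsnd w).choose_spec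
  have hgf : ∀ v, g (f v) = v := by
    intro v
    have := keyfun' (m := e'.symm (f v) + 1) (n := e.symm v + 1) (p := (g (f v), f v)) (q := (v, f v)) (hg (f v)) (hf v) rfl
    exact congrArg Prod.fst this
  have hfg : ∀ w, f (g w) = w := by
    intro w
    have := keyfun (m := e.symm (g w) + 1) (n := e'.symm w + 1) (p := (g w, f (g w))) (q := (g w, w)) (hf (g w)) (hg w) rfl
    exact congrArg Prod.snd this
  refine ⟨⟨⟨f, g, hgf, hfg⟩, ?_⟩⟩
  intro u v
  have hp := hf u
  have hq := hf v
  rcases le_total (e.symm u + 1) (e.symm v + 1) with hmn | hmn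
  · exact ((S (e.symm v + 1)).2.2.2 (u, f u) ((hmono hmn).mem hp) (v, f v) hq).symm
  · exact ((S (e.symm u + 1)).2.2.2 (u, f u) hp (v, f v) ((hmono hmn).mem hq)).symm
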